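/- Let f : |P| → |Q| be a weak morphism of precubical sets that is a homeomorphism and A ⊆ Q a finite precubical subset. If some element of P is broken in A, then there exists a top cube of c(A) that is broken in A; moreover any top cube of c(A) that is broken in A has degree > 0. -/

import Mathlib

/-- A graded set with boundary operators: the data of a precubical set.
`cell` is the set of all cubes, `deg` the degree, and `d b i x` the face
`dᵢᵇ x`, meaningful for `1 ≤ i ≤ deg x` (`b = false` is `d⁰`, `b = true` is `d¹`). -/
structure PrecubicalSet where
  cell : Type
  deg : cell → ℕ
  d : Bool → ℕ → cell → cell

/-- `P` is a genuine precubical set: faces lower degree by one and the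
precubical relations `dᵢᵏ ∘ dⱼˡ = dⱼ₋₁ˡ ∘ dᵢᵏ` hold for `i < j`. -/
def PrecubicalSet.IsPrecubical (P : PrecubicalSet) : Prop :=
  (∀ (b : Bool) (i : ℕ) (x : P.cell), 1 ≤ i → i ≤ P.deg x →
      P.deg (P.d b i x) = P.deg x - 1) ∧
  (∀ (b b' : Bool) (i j : ℕ) (x : P.cell), 1 ≤ i → i < j → j ≤ P.deg x →
      P.d b i (P.d b' j x) = P.d b' (j - 1) (P.d b i x))

/-- A precubical subset: a graded subset stable under the boundary operators. -/
def PrecubicalSet.IsSub (P : PrecubicalSet) (X : Set P.cell) : Prop :=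
  ∀ (b : Bool) (i : ℕ) (x : P.cell), 1 ≤ i → i ≤ P.deg x → x ∈ X → P.d b i x ∈ X

/-- A morphism of precubical sets: a degree-preserving map commuting with the
boundary operators (on their meaningful range of indices). -/
structure PrecubicalHom (P Q : PrecubicalSet) where
  map : P.cell → Q.cell
  deg_map : ∀ x, Q.deg (map x) = P.deg x
  d_map : ∀ (b : Bool) (i : ℕ) (x : P.cell), 1 ≤ i → i ≤ P.deg x →
    map (P.d b i x) = Q.d b i (map x)
open CategoryTheory

noncomputable section
open scoped Classical DirectSum

instance (P : PrecubicalSet) : TopologicalSpace P.cell := ⊥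

namespace PrecubicalSet

variable (P : PrecubicalSet)

/-- The disjoint union `⨿ₙ Pₙ × [0,1]ⁿ` (cells carry the discrete topology). -/
def ESpace : Type := Σ x : P.cell, Fin (P.deg x) → unitInterval

instance : TopologicalSpace P.ESpace := by unfold ESpace; infer_instance

/-- The map `δᵢᵇ : [0,1]^m → [0,1]^{m+1}` inserting the coordinate `b` at
position `i` (1-based). -/
def insCoord {m : ℕ} (b : Bool) (i : ℕ) (u : Fin m → unitInterval) :
    Fin (m + 1) → unitInterval :=
  fun j =>
    if (j : ℕ) + 1 < i then (if h : (j : ℕ) < m then u ⟨j, h⟩ else 0)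
    else if (j : ℕ) + 1 = i then (if b then 1 else 0)
    else if h : (j : ℕ) - 1 < m then u ⟨(j : ℕ) - 1, h⟩ else 0

/-- The gluing relation of the geometric realisation:
`(dᵢᵇ x, u) ∼ (x, δᵢᵇ u)`. -/
def RelE : P.ESpace → P.ESpace → Prop := fun a z =>
  ∃ (b : Bool) (i : ℕ), 1 ≤ i ∧ i ≤ P.deg z.1 ∧ a.1 = P.d b i z.1 ∧
    HEq (insCoord b i a.2) z.2

/-- The geometric realisation `|P|` of a precubical set. -/
def GeomReal : Type := Quot P.RelE

instance : TopologicalSpace P.GeomReal := by unfold GeomReal; infer_instance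

/-- The point `[x, u]` of `|P|`. -/
def pt (x : P.cell) (u : Fin (P.deg x) → unitInterval) : P.GeomReal :=
  Quot.mk _ ⟨x, u⟩

end PrecubicalSet

namespace PrecubicalSet

/-- The midpoint `½ ∈ [0,1]`. -/
def half : unitInterval := ⟨1/2, by norm_num⟩

/-- The degree of a cell of the grid: a grid cell assigns to each of the `n`
coordinates either a vertex `j` (`(j, false)`) or an edge `[j, j+1]`
(`(j, true)`); the degree is the number of edge coordinates. -/
def gridDeg {n : ℕ} (c : Fin n → ℕ × Bool) : ℕ :=
  (Finset.univ.filter fun i => (c i).2 = true).card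

/-- The boundary operator of the grid: `dₘᵇ` replaces the `m`-th edge
coordinate `[j, j+1]` by the vertex `j` (`b = false`) or `j+1` (`b = true`). -/
def gridD {n : ℕ} (b : Bool) (m : ℕ) (c : Fin n → ℕ × Bool) : Fin n → ℕ × Bool :=
  fun i =>
    if (c i).2 = true ∧
        (Finset.univ.filter fun i' => (c i').2 = true ∧ i' < i).card + 1 = m
    then ((c i).1 + (if b then 1 else 0), false) else c i

/-- The precubical set `⟦0,k₁⟧ ⊗ ⋯ ⊗ ⟦0,kₙ⟧`. -/
def BoxData {n : ℕ} (k : Fin n → ℕ) : PrecubicalSet where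
  cell := {c : Fin n → ℕ × Bool // ∀ i, (c i).1 + (if (c i).2 then 1 else 0) ≤ k i}
  deg := fun c => gridDeg c.1
  d := fun b m c => ⟨gridD b m c.1, by
    intro i
    dsimp only [gridD]
    split
    · rename_i h
      have h2 := c.2 i
      rw [h.1] at h2
      simp only [if_true] at h2
      cases b <;> simp <;> omega
    · exact c.2 i⟩

/-- The cell of the box `⟦0,k₁⟧ ⊗ ⋯ ⊗ ⟦0,kₙ⟧` in whose relatively open
realisation a point `t ∈ [0,k₁] × ⋯ × [0,kₙ]` lies. -/
noncomputable def cellOf {n : ℕ} (k : Fin n → ℕ)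
    (t : ∀ i, Set.Icc (0:ℝ) (k i : ℝ)) : (BoxData k).cell :=
  ⟨fun i => if ((t i : ℝ) = (⌊(t i : ℝ)⌋ : ℤ))
      then ((⌊(t i : ℝ)⌋).toNat, false) else ((⌊(t i : ℝ)⌋).toNat, true), by
    intro i
    have h1 : ⌊(t i : ℝ)⌋ ≤ (k i : ℤ) := by
      have := Int.floor_mono (t i).2.2
      simpa using this
    have h0 : 0 ≤ ⌊(t i : ℝ)⌋ := Int.floor_nonneg.mpr (t i).2.1
    dsimp only
    split
    · simp only [Bool.false_eq_true, if_false, add_zero]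
      omega
    · rename_i h
      have h2 : (t i : ℝ) < (k i : ℝ) := by
        rcases lt_or_eq_of_le (t i).2.2 with h' | h'
        · exact h'
        · exact absurd (by rw [h']; exact_mod_cast (Int.floor_natCast (k i)).symm) h
      have h3 : ⌊(t i : ℝ)⌋ < (k i : ℤ) := by
        rw [Int.floor_lt]
        exact_mod_cast h2
      simp only [if_true]
      omega⟩

/-- The coordinates of `t` inside the open cell of `cellOf k t`: the fractional
parts of the edge coordinates, in order. -/
noncomputable def uOf {n : ℕ} (k : Fin n → ℕ)
    (t : ∀ i, Set.Icc (0:ℝ) (k i : ℝ)) :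
    Fin ((BoxData k).deg (cellOf k t)) → unitInterval :=
  fun m =>
    ⟨Int.fract ((t ((((Finset.univ.filter
          fun i => (((cellOf k t).1 i).2 = true)).orderIsoOfFin rfl) m : _) : Fin n)) : ℝ),
      Int.fract_nonneg _, (Int.fract_lt_one _).le⟩

variable {P Q : PrecubicalSet}

/-- The image of the point of `|⟦0,k₁⟧ ⊗ ⋯ ⊗ ⟦0,kₙ⟧| = [0,k₁] × ⋯ × [0,kₙ]`
with coordinates `t` under the geometric realisation `|ξ|` of a morphism of
precubical sets `ξ : ⟦0,k₁⟧ ⊗ ⋯ ⊗ ⟦0,kₙ⟧ → P`. -/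
noncomputable def realBox {n : ℕ} {k : Fin n → ℕ}
    (ξ : PrecubicalHom (BoxData k) P) (t : ∀ i, Set.Icc (0:ℝ) (k i : ℝ)) :
    P.GeomReal :=
  P.pt (ξ.map (cellOf k t)) (uOf k t ∘ Fin.cast (ξ.deg_map _))

/-- `f : |P| → |Q|` is a weak morphism of precubical sets: it sends vertices to
vertices, and for every morphism of precubical sets
`ξ : ⟦0,k₁⟧ ⊗ ⋯ ⊗ ⟦0,kₙ⟧ → P` there are a morphism of precubical sets
`χ : ⟦0,l₁⟧ ⊗ ⋯ ⊗ ⟦0,lₙ⟧ → Q` and a dihomeomorphism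
`φ : [0,k₁] × ⋯ × [0,kₙ] → [0,l₁] × ⋯ × [0,lₙ]` with `f ∘ |ξ| = |χ| ∘ φ`. -/
def IsWeakMorphism (f : P.GeomReal → Q.GeomReal) : Prop :=
  (∀ v : P.cell, P.deg v = 0 →
      ∃ w : Q.cell, Q.deg w = 0 ∧
        f (P.pt v fun _ => half) = Q.pt w fun _ => half) ∧
  ∀ (n : ℕ) (k : Fin n → ℕ), (∀ i, 1 ≤ k i) →
    ∀ ξ : PrecubicalHom (BoxData k) P,
      ∃ (l : Fin n → ℕ), (∀ i, 1 ≤ l i) ∧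
        ∃ (χ : PrecubicalHom (BoxData l) Q)
          (φ : (∀ i, Set.Icc (0:ℝ) (k i : ℝ)) ≃ₜ (∀ i, Set.Icc (0:ℝ) (l i : ℝ))),
          (∀ s t, s ≤ t ↔ φ s ≤ φ t) ∧
          ∀ t, f (realBox ξ t) = realBox χ (φ t)

/-- `p ∈ P` is the carrier of `a ∈ Q` with respect to `f : |P| → |Q|`: there is
`u` in the open cube with `f([p,u]) = [a,(½,…,½)]`.  (For a weak morphism that
is a homeomorphism, the carrier of `a` exists and is unique.) -/
def IsCarrier (f : P.GeomReal → Q.GeomReal) (p : P.cell) (a : Q.cell) : Prop :=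
  ∃ u : Fin (P.deg p) → unitInterval,
    (∀ j, (u j : ℝ) ∈ Set.Ioo (0:ℝ) 1) ∧
    f (P.pt p u) = Q.pt a fun _ => half

/-- The precubical subset `x♯(⟦0,1⟧^{⊗ deg x})` generated by a cube `x`:
all iterated faces of `x`. -/
def gen (P : PrecubicalSet) (x : P.cell) : Set P.cell :=
  {y | Relation.ReflTransGen
    (fun a c => ∃ (b : Bool) (i : ℕ), 1 ≤ i ∧ i ≤ P.deg c ∧ a = P.d b i c) y x}

/-- The subset `|X| ⊆ |P|` determined by a precubical subset `X ⊆ P`. -/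
def geomSet (P : PrecubicalSet) (X : Set P.cell) : Set P.GeomReal :=
  {z | ∃ x ∈ X, ∃ u, z = P.pt x u}

/-- The carrier `c(A) = ⋃_{a ∈ A} c(a)♯(⟦0,1⟧^{⊗ deg c(a)})` of a precubical
subset `A ⊆ Q`, where `c` is the carrier function of `f`. -/
def carrierSet (c : Q.cell → P.cell) (A : Set Q.cell) : Set P.cell :=
  {p | ∃ a ∈ A, p ∈ P.gen (c a)}

/-- `z` is a top cube of `S`: `z ∈ S` and `z` is not a proper iterated face of
any element of `S`. -/
def TopCube (P : PrecubicalSet) (S : Set P.cell) (z : P.cell) : Prop :=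
  z ∈ S ∧ ∀ x ∈ S, P.deg z < P.deg x → z ∉ P.gen x

/-- An `n`-cube `x ∈ P` is broken in the precubical subset `A ⊆ Q` (with
respect to `f` with carrier function `c`): `x ∈ c(A)` and
`f(x♯(⟦0,1⟧^{⊗n})) ⊄ A` (on geometric realisations). -/
def Broken (f : P.GeomReal → Q.GeomReal) (c : Q.cell → P.cell)
    (A : Set Q.cell) (x : P.cell) : Prop :=
  x ∈ carrierSet c A ∧ ¬ (f '' P.geomSet (P.gen x) ⊆ Q.geomSet A)

end PrecubicalSet

private lemma aux_deg_le {P : PrecubicalSet} (hP : P.IsPrecubical) :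
    ∀ {y z : P.cell}, y ∈ P.gen z → P.deg y ≤ P.deg z := by
  intro y z h
  induction h using Relation.ReflTransGen.head_induction_on with
  | refl => exact le_rfl
  | head hr _ ih =>
    obtain ⟨b, i, hi1, hi2, ha⟩ := hr
    rw [ha, hP.1 b i _ hi1 hi2]
    omega

open PrecubicalSet in
/-- Let `f : |P| → |Q|` be a weak morphism of precubical sets
that is a homeomorphism, with carrier function `c`, and let `A ⊆ Q` be a finite
precubical subset. If some element of `P` is broken in `A`, then some top cube
of `c(A)` is broken in `A`; moreover any top cube of `c(A)` that is broken in
`A` has degree `> 0`. -/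
theorem broken_top_cube (P Q : PrecubicalSet)
    (hP : P.IsPrecubical) (hQ : Q.IsPrecubical)
    (f : P.GeomReal ≃ₜ Q.GeomReal) (hf : IsWeakMorphism (P := P) (Q := Q) f)
    (c : Q.cell → P.cell) (hc : ∀ a, IsCarrier (P := P) (Q := Q) f (c a) a)
    (A : Set Q.cell) (hA : Q.IsSub A) (hfin : A.Finite)
    (hbr : ∃ x : P.cell, Broken (P := P) (Q := Q) f c A x) :
    (∃ z : P.cell, TopCube P (carrierSet c A) z ∧
        Broken (P := P) (Q := Q) f c A z) ∧
      ∀ z : P.cell, TopCube P (carrierSet c A) z →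
        Broken (P := P) (Q := Q) f c A z → 0 < P.deg z := by
  obtain ⟨x, hx⟩ := hbr
  constructor
  · set D : Set ℕ := {n | ∃ z, z ∈ carrierSet c A ∧ x ∈ P.gen z ∧ P.deg z = n}
      with hD
    have hne : D.Nonempty := by
      obtain ⟨a, ha, hxa⟩ := hx.1
      exact ⟨P.deg (c a), c a, ⟨a, ha, Relation.ReflTransGen.refl⟩, hxa, rfl⟩
    have hbdd : BddAbove D := by
      refine ⟨hfin.toFinset.sup fun a => P.deg (c a), ?_⟩
      rintro n ⟨z, ⟨a, ha, hza⟩, -, rfl⟩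
      exact le_trans (aux_deg_le hP hza)
        (Finset.le_sup (f := fun a => P.deg (c a)) (hfin.mem_toFinset.mpr ha))
    obtain ⟨z, hzS, hxz, hdz⟩ := Nat.sSup_mem hne hbdd
    refine ⟨z, ⟨hzS, ?_⟩, hzS, ?_⟩
    · intro w hw hlt hzw
      have hmem : P.deg w ∈ D :=
        ⟨w, hw, Relation.ReflTransGen.trans hxz hzw, rfl⟩
      have := le_csSup hbdd hmem
      omega
    · intro hsub
      apply hx.2
      refine subset_trans (Set.image_mono ?_) hsub
      rintro p ⟨y, hy, u, rfl⟩
      exact ⟨y, Relation.ReflTransGen.trans hy hxz, u, rfl⟩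
  · intro z hz hbz
    by_contra hdeg
    push_neg at hdeg
    have hz0 : P.deg z = 0 := by omega
    obtain ⟨a, ha, hza⟩ := hbz.1
    have hca0 : P.deg (c a) = 0 := by
      by_contra hca
      exact hz.2 (c a) ⟨a, ha, Relation.ReflTransGen.refl⟩ (by omega) hza
    have hzca : z = c a := by
      rcases Relation.ReflTransGen.cases_tail hza with h | ⟨m, _, b, i, hi1, hi2, _⟩
      · exact h.symm
      · omega
    subst hzca
    apply hbz.2
    rintro q ⟨p, ⟨y, hy, u, rfl⟩, rfl⟩
    have hyz : y = c a := by
      rcases Relation.ReflTransGen.cases_tail hy with h | ⟨m, _, b, i, hi1, hi2, _⟩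
      · exact h.symm
      · omega
    subst hyz
    obtain ⟨u₀, _, hfu⟩ := hc a
    have hu : u = u₀ := funext fun j => absurd j.isLt (by omega)
    rw [hu, hfu]
    exact ⟨a, ha, _, rfl⟩
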